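/- If U is m-irreducible, then U is either m-transient or m-recurrent. -/

import Mathlib

open MeasureTheory ENNReal Filter Set

/-- A sub-Markovian resolvent of kernels on a measurable space `E`. -/
structure SubMarkovResolvent (E : Type*) [MeasurableSpace E] where
  /-- the kernel `U_α` for each `α > 0` -/
  kernel : ℝ → E → MeasureTheory.Measure E
  measurable_op : ∀ α : ℝ, 0 < α → ∀ f : E → ℝ≥0∞, Measurable f →
    Measurable (fun x => ∫⁻ y, f y ∂(kernel α x))
  resolvent_eq : ∀ α β : ℝ, 0 < α → α ≤ β → ∀ f : E → ℝ≥0∞, Measurable f → ∀ x,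
    ∫⁻ y, f y ∂(kernel α x)
      = (∫⁻ y, f y ∂(kernel β x))
        + ENNReal.ofReal (β - α) * ∫⁻ y, (∫⁻ z, f z ∂(kernel β y)) ∂(kernel α x)
  subMarkov : ∀ α : ℝ, 0 < α → ∀ x, ENNReal.ofReal α * kernel α x Set.univ ≤ 1

namespace SubMarkovResolvent

variable {E : Type*} [MeasurableSpace E]

/-- The action of `U_α` on positive measurable functions. -/
noncomputable def op (R : SubMarkovResolvent E) (α : ℝ) (f : E → ℝ≥0∞) (x : E) : ℝ≥0∞ :=
  ∫⁻ y, f y ∂(R.kernel α x)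

/-- The action of `U_α` on real-valued functions. -/
noncomputable def opR (R : SubMarkovResolvent E) (α : ℝ) (f : E → ℝ) (x : E) : ℝ :=
  ∫ y, f y ∂(R.kernel α x)

/-- The initial (potential) kernel `U = sup_{α > 0} U_α`. -/
noncomputable def pot (R : SubMarkovResolvent E) (f : E → ℝ≥0∞) (x : E) : ℝ≥0∞ :=
  ⨆ (α : ℝ) (_ : 0 < α), R.op α f x

/-- `m` is sub-invariant: `m ∘ (α U_α) ≤ m` for all `α > 0`. -/
def SubInvariant (R : SubMarkovResolvent E) (m : Measure E) : Prop :=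
  ∀ α : ℝ, 0 < α → ∀ f : E → ℝ≥0∞, Measurable f →
    ENNReal.ofReal α * ∫⁻ x, R.op α f x ∂m ≤ ∫⁻ x, f x ∂m

/-- `U` is `m`-transient. -/
def Transient (R : SubMarkovResolvent E) (m : Measure E) : Prop :=
  ∃ f : E → ℝ≥0∞, Measurable f ∧ (∫⁻ x, f x ∂m < ⊤) ∧
    (∀ᵐ x ∂m, 0 < f x) ∧ (∀ᵐ x ∂m, R.pot f x < ⊤)

/-- `U` is `m`-recurrent. -/
def Recurrent (R : SubMarkovResolvent E) (m : Measure E) : Prop :=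
  ∀ f : E → ℝ≥0∞, Measurable f → (∫⁻ x, f x ∂m < ⊤) →
    m {x | 0 < R.pot f x ∧ R.pot f x < ⊤} = 0

/-- `A` is `U`-absorbing with respect to `m`. -/
def Absorbing (R : SubMarkovResolvent E) (m : Measure E) (A : Set E) : Prop :=
  MeasurableSet A ∧ ∀ᵐ x ∂m, x ∈ A → R.pot (Set.indicator Aᶜ 1) x = 0

/-- `U` is `m`-irreducible. -/
def Irreducible (R : SubMarkovResolvent E) (m : Measure E) : Prop :=
  ∀ A : Set E, R.Absorbing m A → m A = 0 ∨ m Aᶜ = 0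

/-- `u` is `U`-excessive: supermedian and `α U_α u ↑ u` as `α → ∞`. -/
def Excessive (R : SubMarkovResolvent E) (u : E → ℝ≥0∞) : Prop :=
  Measurable u ∧ (∀ α : ℝ, 0 < α → ∀ x, ENNReal.ofReal α * R.op α u x ≤ u x) ∧
    (∀ x, (⨆ (α : ℝ) (_ : 0 < α), ENNReal.ofReal α * R.op α u x) = u x)

/-- The complete maximum principle for the initial kernel of `U`. -/
def CompleteMaxPrinciple (R : SubMarkovResolvent E) : Prop :=
  ∀ (f g : E → ℝ≥0∞) (c : ℝ≥0∞), Measurable f → Measurable g →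
    (∀ x, 0 < f x → R.pot f x ≤ R.pot g x + c) → ∀ x, R.pot f x ≤ R.pot g x + c

/-- `U` and `U*` are in weak duality with respect to `m`. -/
def InDuality (R S : SubMarkovResolvent E) (m : Measure E) : Prop :=
  ∀ α : ℝ, 0 < α → ∀ f g : E → ℝ≥0∞, Measurable f → Measurable g →
    ∫⁻ x, f x * R.op α g x ∂m = ∫⁻ x, g x * S.op α f x ∂m

/-- A real-valued function `v` is `U`-invariant with respect to `m`:
`U_α(v f) = v ⋅ U_α f` `m`-a.e. for all `α > 0` and bounded positive measurable `f`. -/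
def Invariant (R : SubMarkovResolvent E) (m : Measure E) (v : E → ℝ) : Prop :=
  ∀ α : ℝ, 0 < α → ∀ f : E → ℝ, Measurable f → (∀ x, 0 ≤ f x) → (∃ C : ℝ, ∀ x, f x ≤ C) →
    ∀ᵐ x ∂m, R.opR α (fun y => v y * f y) x = v x * R.opR α f x

end SubMarkovResolvent

namespace SubMarkovResolvent

variable {E : Type*} [MeasurableSpace E] (R : SubMarkovResolvent E)

lemma aux_op_apply (α : ℝ) (f : E → ℝ≥0∞) (x : E) :
    R.op α f x = ∫⁻ y, f y ∂(R.kernel α x) := rfl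

lemma aux_measurable_op {α : ℝ} (hα : 0 < α) {f : E → ℝ≥0∞} (hf : Measurable f) :
    Measurable (R.op α f) := R.measurable_op α hα f hf

lemma aux_op_mono {f g : E → ℝ≥0∞} (h : ∀ y, f y ≤ g y) (α : ℝ) (x : E) :
    R.op α f x ≤ R.op α g x := lintegral_mono h

lemma aux_res {α β : ℝ} (hα : 0 < α) (hle : α ≤ β) {f : E → ℝ≥0∞} (hf : Measurable f) (x : E) :
    R.op α f x = R.op β f x + ENNReal.ofReal (β - α) * R.op α (R.op β f) x :=
  R.resolvent_eq α β hα hle f hf x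

lemma aux_op_anti {f : E → ℝ≥0∞} (hf : Measurable f) {α β : ℝ} (hα : 0 < α) (hle : α ≤ β)
    (x : E) : R.op β f x ≤ R.op α f x := by
  rw [R.aux_res hα hle hf x]; exact le_self_add

lemma aux_op_le_const {c : ℝ≥0∞} {f : E → ℝ≥0∞} (h : ∀ y, f y ≤ c) {α : ℝ} (hα : 0 < α)
    (x : E) : R.op α f x ≤ c * (ENNReal.ofReal α)⁻¹ := by
  calc R.op α f x ≤ ∫⁻ _, c ∂(R.kernel α x) := lintegral_mono h
  _ = c * (R.kernel α x Set.univ) := lintegral_const c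
  _ ≤ c * (ENNReal.ofReal α)⁻¹ := by
      refine mul_le_mul_right ?_ c
      rw [ENNReal.le_inv_iff_mul_le, mul_comm]
      exact R.subMarkov α hα x

/-- iterates of `U_β` -/
noncomputable def aux_iter (β : ℝ) (n : ℕ) (f : E → ℝ≥0∞) : E → ℝ≥0∞ := (R.op β)^[n] f

lemma aux_iter_zero (β : ℝ) (f : E → ℝ≥0∞) : R.aux_iter β 0 f = f := rfl

lemma aux_iter_succ (β : ℝ) (n : ℕ) (f : E → ℝ≥0∞) :
    R.aux_iter β (n+1) f = R.op β (R.aux_iter β n f) := Function.iterate_succ_apply' _ _ _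

lemma aux_iter_succ' (β : ℝ) (n : ℕ) (f : E → ℝ≥0∞) :
    R.aux_iter β (n+1) f = R.aux_iter β n (R.op β f) := Function.iterate_succ_apply _ _ _

lemma aux_measurable_iter {β : ℝ} (hβ : 0 < β) (n : ℕ) {f : E → ℝ≥0∞} (hf : Measurable f) :
    Measurable (R.aux_iter β n f) := by
  induction n with
  | zero => exact hf
  | succ n ih => rw [aux_iter_succ]; exact R.aux_measurable_op hβ ih

lemma aux_iter_le_const {c : ℝ≥0∞} {f : E → ℝ≥0∞} (h : ∀ y, f y ≤ c) {β : ℝ} (hβ : 0 < β)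
    (n : ℕ) (y : E) : R.aux_iter β n f y ≤ c * ((ENNReal.ofReal β)⁻¹)^n := by
  induction n generalizing y with
  | zero => simpa [aux_iter_zero] using h y
  | succ n ih =>
    rw [aux_iter_succ]
    calc R.op β (R.aux_iter β n f) y ≤ (c * ((ENNReal.ofReal β)⁻¹)^n) * (ENNReal.ofReal β)⁻¹ :=
      R.aux_op_le_const (fun y => ih y) hβ y
    _ = c * ((ENNReal.ofReal β)⁻¹)^(n+1) := by ring

lemma aux_neumann_partial {α β : ℝ} (hα : 0 < α) (hle : α ≤ β) {f : E → ℝ≥0∞}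
    (hf : Measurable f) (N : ℕ) (x : E) :
    R.op α f x = (∑ n ∈ Finset.range N, ENNReal.ofReal (β-α)^n * R.aux_iter β (n+1) f x)
      + ENNReal.ofReal (β-α)^N * R.op α (R.aux_iter β N f) x := by
  induction N with
  | zero => simp [aux_iter_zero]
  | succ N ih =>
    rw [ih, Finset.sum_range_succ]
    have h := R.aux_res hα hle (R.aux_measurable_iter (lt_of_lt_of_le hα hle) N hf) x
    rw [h, ← aux_iter_succ]
    ring

lemma aux_neumann {α β : ℝ} (hα : 0 < α) (hle : α ≤ β) {f : E → ℝ≥0∞} (hf : Measurable f)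
    {c : ℝ≥0∞} (hfc : ∀ y, f y ≤ c) (hc : c ≠ ⊤) (x : E) :
    R.op α f x = ∑' n, ENNReal.ofReal (β-α)^n * R.aux_iter β (n+1) f x := by
  have hβ : 0 < β := lt_of_lt_of_le hα hle
  refine le_antisymm ?_ ?_
  · set r := ENNReal.ofReal ((β-α)/β) with hr_def
    have hr1 : r < 1 := by
      rw [hr_def, ENNReal.ofReal_lt_one, div_lt_one hβ]; linarith
    have hK : c * (ENNReal.ofReal α)⁻¹ ≠ ⊤ :=
      ENNReal.mul_ne_top hc (by simp [ENNReal.ofReal_pos.2 hα |>.ne'])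
    have hrem : ∀ N, ENNReal.ofReal (β-α)^N * R.op α (R.aux_iter β N f) x
        ≤ r^N * (c * (ENNReal.ofReal α)⁻¹) := by
      intro N
      have h1 : R.op α (R.aux_iter β N f) x
          ≤ (c * ((ENNReal.ofReal β)⁻¹)^N) * (ENNReal.ofReal α)⁻¹ :=
        R.aux_op_le_const (fun y => R.aux_iter_le_const hfc hβ N y) hα x
      calc ENNReal.ofReal (β-α)^N * R.op α (R.aux_iter β N f) x
          ≤ ENNReal.ofReal (β-α)^N * ((c * ((ENNReal.ofReal β)⁻¹)^N) * (ENNReal.ofReal α)⁻¹) :=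
        mul_le_mul_right h1 _
      _ = (ENNReal.ofReal (β-α) * (ENNReal.ofReal β)⁻¹)^N * (c * (ENNReal.ofReal α)⁻¹) := by
        rw [mul_pow]; ring
      _ = r^N * (c * (ENNReal.ofReal α)⁻¹) := by
        rw [hr_def, ENNReal.ofReal_div_of_pos hβ, div_eq_mul_inv]
    refine ge_of_tendsto' (x := Filter.atTop)
      (f := fun N => (∑' n, ENNReal.ofReal (β-α)^n * R.aux_iter β (n+1) f x)
        + r^N * (c * (ENNReal.ofReal α)⁻¹)) ?_ ?_
    · have h2 := ENNReal.Tendsto.mul_const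
        (ENNReal.tendsto_pow_atTop_nhds_zero_of_lt_one hr1)
        (b := c * (ENNReal.ofReal α)⁻¹) (Or.inr hK)
      simpa using Filter.Tendsto.const_add _ h2
    · intro N
      rw [R.aux_neumann_partial hα hle hf N x]
      exact add_le_add (ENNReal.sum_le_tsum _) (hrem N)
  · rw [ENNReal.tsum_eq_iSup_nat]
    refine iSup_le fun N => ?_
    rw [R.aux_neumann_partial hα hle hf N x]
    exact le_self_add

lemma aux_comm_bdd {α β : ℝ} (hα : 0 < α) (hle : α ≤ β) {f : E → ℝ≥0∞} (hf : Measurable f)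
    {c : ℝ≥0∞} (hfc : ∀ y, f y ≤ c) (hc : c ≠ ⊤) (x : E) :
    R.op β (R.op α f) x = R.op α (R.op β f) x := by
  have hβ : 0 < β := lt_of_lt_of_le hα hle
  have h1 : R.op β (R.op α f) x = ∑' n, ENNReal.ofReal (β-α)^n * R.aux_iter β (n+2) f x := by
    calc R.op β (R.op α f) x
        = ∫⁻ y, ∑' n, ENNReal.ofReal (β-α)^n * R.aux_iter β (n+1) f y ∂(R.kernel β x) :=
      lintegral_congr fun y => R.aux_neumann hα hle hf hfc hc y
    _ = ∑' n, ∫⁻ y, ENNReal.ofReal (β-α)^n * R.aux_iter β (n+1) f y ∂(R.kernel β x) :=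
      lintegral_tsum fun n => ((R.aux_measurable_iter hβ (n+1) hf).const_mul _).aemeasurable
    _ = ∑' n, ENNReal.ofReal (β-α)^n * R.aux_iter β (n+2) f x := by
      refine tsum_congr fun n => ?_
      rw [lintegral_const_mul _ (R.aux_measurable_iter hβ (n+1) hf),
        ← R.aux_op_apply, ← aux_iter_succ]
  have hbd : ∀ y, R.op β f y ≤ c * (ENNReal.ofReal β)⁻¹ := fun y => R.aux_op_le_const hfc hβ y
  have hct : c * (ENNReal.ofReal β)⁻¹ ≠ ⊤ :=
    ENNReal.mul_ne_top hc (by simp [ENNReal.ofReal_pos.2 hβ |>.ne'])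
  have h2 : R.op α (R.op β f) x = ∑' n, ENNReal.ofReal (β-α)^n * R.aux_iter β (n+2) f x := by
    rw [R.aux_neumann hα hle (R.aux_measurable_op hβ hf) hbd hct x]
    exact tsum_congr fun n => by rw [← aux_iter_succ']
  rw [h1, h2]

lemma aux_comm_le {α β : ℝ} (hα : 0 < α) (hle : α ≤ β) {f : E → ℝ≥0∞} (hf : Measurable f)
    (x : E) : R.op β (R.op α f) x = R.op α (R.op β f) x := by
  have hβ : 0 < β := lt_of_lt_of_le hα hle
  set g : ℕ → E → ℝ≥0∞ := fun k y => min (f y) (k : ℝ≥0∞) with hg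
  have hgm : ∀ k, Measurable (g k) := fun k => hf.min measurable_const
  have hgmono : Monotone g := by
    intro k k' hk y
    exact min_le_min le_rfl (by exact_mod_cast Nat.cast_le.2 hk)
  have hgsup : ∀ y, (⨆ k, g k y) = f y := by
    intro y
    refine le_antisymm (iSup_le fun k => min_le_left _ _) ?_
    rcases eq_or_ne (f y) ⊤ with h | h
    · have hky : ∀ k : ℕ, g k y = (k : ℝ≥0∞) := by
        intro k; simp only [hg]; rw [h]; exact min_eq_right le_top
      rw [h]
      calc (⊤ : ℝ≥0∞) = ⨆ k : ℕ, (k : ℝ≥0∞) := ENNReal.iSup_natCast.symm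
      _ ≤ ⨆ k, g k y := iSup_mono fun k => le_of_eq (hky k).symm
    · obtain ⟨k, hk⟩ := ENNReal.exists_nat_gt h
      exact le_iSup_of_le k (le_min le_rfl hk.le)
  have e1 : ∀ (γ : ℝ), 0 < γ → ∀ z, R.op γ f z = ⨆ k, R.op γ (g k) z := by
    intro γ hγ z
    calc R.op γ f z = ∫⁻ y, ⨆ k, g k y ∂(R.kernel γ z) :=
      lintegral_congr fun y => (hgsup y).symm
    _ = ⨆ k, R.op γ (g k) z := lintegral_iSup hgm hgmono
  calc R.op β (R.op α f) x
      = ∫⁻ z, ⨆ k, R.op α (g k) z ∂(R.kernel β x) := lintegral_congr fun z => e1 α hα z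
  _ = ⨆ k, R.op β (R.op α (g k)) x := by
      refine lintegral_iSup (fun k => R.aux_measurable_op hα (hgm k)) ?_
      intro k k' hk z
      exact R.aux_op_mono (fun y => hgmono hk y) α z
  _ = ⨆ k, R.op α (R.op β (g k)) x := by
      refine iSup_congr fun k => ?_
      exact R.aux_comm_bdd hα hle (hgm k) (fun y => min_le_right _ _) (ENNReal.natCast_ne_top k) x
  _ = ∫⁻ z, ⨆ k, R.op β (g k) z ∂(R.kernel α x) := by
      refine (lintegral_iSup (fun k => R.aux_measurable_op hβ (hgm k)) ?_).symm
      intro k k' hk z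
      exact R.aux_op_mono (fun y => hgmono hk y) β z
  _ = R.op α (R.op β f) x := (lintegral_congr fun z => e1 β hβ z).symm

lemma aux_comm {α β : ℝ} (hα : 0 < α) (hβ : 0 < β) {f : E → ℝ≥0∞} (hf : Measurable f)
    (x : E) : R.op α (R.op β f) x = R.op β (R.op α f) x := by
  rcases le_total α β with h | h
  · exact (R.aux_comm_le hα h hf x).symm
  · exact R.aux_comm_le hβ h hf x

lemma aux_pseq_pos (n : ℕ) : 0 < (1 : ℝ)/(n+1) := by positivity

lemma aux_one_div_anti {a b : ℕ} (h : a ≤ b) : (1 : ℝ)/(b+1) ≤ 1/(a+1) := by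
  apply one_div_le_one_div_of_le (by positivity)
  exact_mod_cast Nat.succ_le_succ h

lemma aux_pot_eq {f : E → ℝ≥0∞} (hf : Measurable f) (x : E) :
    R.pot f x = ⨆ n : ℕ, R.op (1/(n+1 : ℝ)) f x := by
  refine le_antisymm ?_ ?_
  · refine iSup₂_le fun α hα => ?_
    obtain ⟨n, hn⟩ := exists_nat_one_div_lt hα
    exact le_iSup_of_le n (R.aux_op_anti hf (aux_pseq_pos n) hn.le x)
  · exact iSup_le fun n => le_iSup₂_of_le (1/(n+1 : ℝ)) (aux_pseq_pos n) le_rfl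

lemma aux_measurable_pot {f : E → ℝ≥0∞} (hf : Measurable f) : Measurable (R.pot f) := by
  have h : R.pot f = fun x => ⨆ n : ℕ, R.op (1/(n+1 : ℝ)) f x :=
    funext fun x => R.aux_pot_eq hf x
  rw [h]
  exact Measurable.iSup fun n => R.aux_measurable_op (aux_pseq_pos n) hf

lemma aux_op_le_pot {f : E → ℝ≥0∞} {q : ℝ} (hq : 0 < q) (x : E) :
    R.op q f x ≤ R.pot f x := le_iSup₂_of_le q hq le_rfl

lemma aux_opn_mono {f : E → ℝ≥0∞} (hf : Measurable f) :
    Monotone (fun n : ℕ => R.op (1/(n+1 : ℝ)) f) := by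
  intro n n' h x
  exact R.aux_op_anti hf (aux_pseq_pos n') (aux_one_div_anti h) x

lemma aux_op_pot {f : E → ℝ≥0∞} (hf : Measurable f) {q : ℝ} (hq : 0 < q) (x : E) :
    R.op q (R.pot f) x = ⨆ n : ℕ, R.op (1/(n+1 : ℝ)) (R.op q f) x := by
  calc R.op q (R.pot f) x = ∫⁻ y, ⨆ n : ℕ, R.op (1/(n+1 : ℝ)) f y ∂(R.kernel q x) :=
    lintegral_congr fun y => R.aux_pot_eq hf y
  _ = ⨆ n : ℕ, R.op q (R.op (1/(n+1 : ℝ)) f) x :=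
    lintegral_iSup (fun n => R.aux_measurable_op (aux_pseq_pos n) hf) (R.aux_opn_mono hf)
  _ = ⨆ n : ℕ, R.op (1/(n+1 : ℝ)) (R.op q f) x :=
    iSup_congr fun n => R.aux_comm hq (aux_pseq_pos n) hf x

lemma aux_pot_op {f : E → ℝ≥0∞} (hf : Measurable f) {q : ℝ} (hq : 0 < q) (x : E) :
    R.pot (R.op q f) x = R.op q (R.pot f) x := by
  rw [R.aux_pot_eq (R.aux_measurable_op hq hf) x, R.aux_op_pot hf hq x]

lemma aux_supermedian {f : E → ℝ≥0∞} (hf : Measurable f) {q : ℝ} (hq : 0 < q) (x : E) :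
    ENNReal.ofReal q * R.op q (R.pot f) x ≤ R.pot f x := by
  have key : ∀ m : ℕ, ENNReal.ofReal (q - 1/(m+1)) * R.op q (R.pot f) x ≤ R.pot f x := by
    intro m
    rw [R.aux_op_pot hf hq x, ENNReal.mul_iSup]
    refine iSup_le fun n => ?_
    set n' := max n m with hn'
    have h1 : R.op (1/(n+1 : ℝ)) (R.op q f) x ≤ R.op (1/(n'+1 : ℝ)) (R.op q f) x :=
      R.aux_opn_mono (R.aux_measurable_op hq hf) (le_max_left n m) x
    have h2 : ENNReal.ofReal (q - 1/(m+1)) ≤ ENNReal.ofReal (q - 1/(n'+1)) := by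
      apply ENNReal.ofReal_le_ofReal
      have := aux_one_div_anti (le_max_right n m)
      linarith
    calc ENNReal.ofReal (q - 1/(m+1)) * R.op (1/(n+1 : ℝ)) (R.op q f) x
        ≤ ENNReal.ofReal (q - 1/(n'+1)) * R.op (1/(n'+1 : ℝ)) (R.op q f) x := mul_le_mul' h2 h1
    _ ≤ R.pot f x := by
      rcases le_or_gt (1/(n'+1 : ℝ)) q with hle | hlt
      · have hres := R.aux_res (aux_pseq_pos n') hle hf x
        calc ENNReal.ofReal (q - 1/(n'+1)) * R.op (1/(n'+1 : ℝ)) (R.op q f) x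
            ≤ R.op (1/(n'+1 : ℝ)) f x := by rw [hres]; exact le_add_self
        _ ≤ R.pot f x := R.aux_op_le_pot (aux_pseq_pos n') x
      · have h0 : ENNReal.ofReal (q - 1/(n'+1)) = 0 := by
          apply ENNReal.ofReal_eq_zero.2; linarith
        rw [h0, zero_mul]; exact zero_le
  have hsup : (⨆ m : ℕ, ENNReal.ofReal (q - 1/(m+1))) = ENNReal.ofReal q := by
    have hmono : Monotone (fun m : ℕ => ENNReal.ofReal (q - 1/(m+1))) := by
      intro a b hab
      apply ENNReal.ofReal_le_ofReal
      have := aux_one_div_anti hab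
      linarith
    have htend : Tendsto (fun m : ℕ => ENNReal.ofReal (q - 1/(m+1))) atTop
        (nhds (ENNReal.ofReal q)) := by
      have h3 : Tendsto (fun m : ℕ => q - 1/(m+1 : ℝ)) atTop (nhds q) := by
        have h4 := tendsto_one_div_add_atTop_nhds_zero_nat (𝕜 := ℝ)
        have h5 : Tendsto (fun m : ℕ => q - 1/(m+1 : ℝ)) atTop (nhds (q - 0)) :=
          tendsto_const_nhds.sub h4
        simpa using h5
      exact (ENNReal.continuous_ofReal.tendsto q).comp h3
    exact tendsto_nhds_unique (tendsto_atTop_iSup hmono) htend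
  calc ENNReal.ofReal q * R.op q (R.pot f) x
      = ⨆ m : ℕ, ENNReal.ofReal (q - 1/(m+1)) * R.op q (R.pot f) x := by
        rw [← hsup, ENNReal.iSup_mul]
  _ ≤ R.pot f x := iSup_le key

lemma aux_absorbing_lt_top (m : Measure E) {f : E → ℝ≥0∞} (hf : Measurable f) :
    R.Absorbing m {x | R.pot f x < ⊤} := by
  have hpm := R.aux_measurable_pot hf
  have hAm : MeasurableSet {x | R.pot f x < ⊤} := measurableSet_lt hpm measurable_const
  refine ⟨hAm, ae_of_all _ fun x hx => ?_⟩
  have hx' : R.pot f x < ⊤ := hx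
  rw [R.aux_pot_eq (measurable_one.indicator hAm.compl) x]
  rw [ENNReal.iSup_eq_zero]
  intro n
  have hfin : (∫⁻ y, R.pot f y ∂(R.kernel (1/(n+1 : ℝ)) x)) ≠ ⊤ := by
    intro htop
    have hs := R.aux_supermedian hf (aux_pseq_pos n) x
    rw [R.aux_op_apply, htop,
      ENNReal.mul_top (ENNReal.ofReal_pos.2 (aux_pseq_pos n)).ne'] at hs
    exact absurd (top_le_iff.1 hs) hx'.ne
  have hker : (R.kernel (1/(n+1 : ℝ)) x) {y | ¬ R.pot f y < ⊤} = 0 :=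
    ae_iff.1 (ae_lt_top hpm hfin)
  rw [R.aux_op_apply, lintegral_indicator_one hAm.compl]
  rw [Set.compl_setOf]
  simpa using hker

lemma aux_absorbing_zero (m : Measure E) {f : E → ℝ≥0∞} (hf : Measurable f) :
    R.Absorbing m {x | R.pot f x = 0} := by
  have hpm := R.aux_measurable_pot hf
  have hAm : MeasurableSet {x | R.pot f x = 0} := hpm (measurableSet_singleton 0)
  refine ⟨hAm, ae_of_all _ fun x hx => ?_⟩
  have hx' : R.pot f x = 0 := hx
  rw [R.aux_pot_eq (measurable_one.indicator hAm.compl) x]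
  rw [ENNReal.iSup_eq_zero]
  intro n
  have h0 : (∫⁻ y, R.pot f y ∂(R.kernel (1/(n+1 : ℝ)) x)) = 0 := by
    have hs := R.aux_supermedian hf (aux_pseq_pos n) x
    rw [hx', nonpos_iff_eq_zero, mul_eq_zero] at hs
    rcases hs with h | h
    · exact absurd h (ENNReal.ofReal_pos.2 (aux_pseq_pos n)).ne'
    · rw [← R.aux_op_apply]; exact h
  have hker : (R.kernel (1/(n+1 : ℝ)) x) {y | ¬ R.pot f y = 0} = 0 := by
    have := (lintegral_eq_zero_iff hpm).1 h0
    exact ae_iff.1 this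
  rw [R.aux_op_apply, lintegral_indicator_one hAm.compl]
  rw [Set.compl_setOf]
  simpa using hker

lemma aux_pot_add {f g : E → ℝ≥0∞} (hf : Measurable f) (hg : Measurable g) (x : E) :
    R.pot (fun y => f y + g y) x = R.pot f x + R.pot g x := by
  rw [R.aux_pot_eq (f := fun y => f y + g y) (hf.add hg) x, R.aux_pot_eq hf x, R.aux_pot_eq hg x]
  rw [ENNReal.iSup_add_iSup (fun i j => ⟨max i j,
    add_le_add (R.aux_opn_mono hf (le_max_left i j) x) (R.aux_opn_mono hg (le_max_right i j) x)⟩)]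
  refine iSup_congr fun n => ?_
  show R.op (1/(n+1 : ℝ)) (fun y => f y + g y) x = R.op (1/(n+1 : ℝ)) f x + R.op (1/(n+1 : ℝ)) g x
  rw [R.aux_op_apply, R.aux_op_apply, R.aux_op_apply]
  exact lintegral_add_left hf _

lemma aux_pot_tsum (g : ℕ → E → ℝ≥0∞) (hg : ∀ n, Measurable (g n)) (x : E) :
    R.pot (fun y => ∑' n, g n y) x = ∑' n, R.pot (g n) x := by
  rw [R.aux_pot_eq (Measurable.ennreal_tsum hg) x]
  have h1 : ∀ k : ℕ, R.op (1/(k+1 : ℝ)) (fun y => ∑' n, g n y) x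
      = ∑' n, R.op (1/(k+1 : ℝ)) (g n) x :=
    fun k => lintegral_tsum fun n => (hg n).aemeasurable
  calc (⨆ k : ℕ, R.op (1/(k+1 : ℝ)) (fun y => ∑' n, g n y) x)
      = ⨆ k : ℕ, ∑' n, R.op (1/(k+1 : ℝ)) (g n) x := iSup_congr h1
  _ = ⨆ k : ℕ, ∫⁻ n, R.op (1/(k+1 : ℝ)) (g n) x ∂(Measure.count) :=
      iSup_congr fun k => (lintegral_count _).symm
  _ = ∫⁻ n, ⨆ k : ℕ, R.op (1/(k+1 : ℝ)) (g n) x ∂(Measure.count) := by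
      refine (lintegral_iSup (fun k => measurable_from_top) ?_).symm
      intro k k' hk n
      exact R.aux_opn_mono (hg n) hk x
  _ = ∑' n, ⨆ k : ℕ, R.op (1/(k+1 : ℝ)) (g n) x := lintegral_count _
  _ = ∑' n, R.pot (g n) x := tsum_congr fun n => (R.aux_pot_eq (hg n) x).symm

lemma aux_pot_const_mul {f : E → ℝ≥0∞} (hf : Measurable f) (c : ℝ≥0∞) (x : E) :
    R.pot (fun y => c * f y) x = c * R.pot f x := by
  rw [R.aux_pot_eq (hf.const_mul c) x, R.aux_pot_eq hf x, ENNReal.mul_iSup]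
  exact iSup_congr fun n => lintegral_const_mul c hf

end SubMarkovResolvent

/-- Dichotomy: an `m`-irreducible resolvent is either `m`-transient or `m`-recurrent. -/
theorem transient_or_recurrent_of_irreducible {E : Type*} [MeasurableSpace E]
    (R : SubMarkovResolvent E) (m : MeasureTheory.Measure E) [MeasureTheory.SigmaFinite m]
    (hm : R.SubInvariant m) (hIrr : R.Irreducible m) :
    R.Transient m ∨ R.Recurrent m := by
  classical
  by_cases hT : R.Transient m
  · exact Or.inl hT
  · right
    intro f hf hfi
    have hpotm := R.aux_measurable_pot hf
    rcases hIrr _ (R.aux_absorbing_lt_top m hf) with h1 | h1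
    · exact measure_mono_null (fun x hx => hx.2) h1
    rcases hIrr _ (R.aux_absorbing_zero m hf) with h2 | h2
    swap
    · refine measure_mono_null ?_ h2
      intro x hx
      exact fun h0 => hx.1.ne' h0
    -- main case: pot f > 0 a.e. and pot f < ⊤ a.e.: construct a transient witness
    exfalso
    apply hT
    set a : ℕ → ℝ≥0∞ := fun n => 2⁻¹^n * ENNReal.ofReal (1/(n+1)) with ha
    have han : ∀ n, a n ≠ 0 := fun n => mul_ne_zero (pow_ne_zero n (by simp))
      (ENNReal.ofReal_pos.2 (SubMarkovResolvent.aux_pseq_pos n)).ne'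
    set g : ℕ → E → ℝ≥0∞ := fun n y => a n * R.op (1/(n+1 : ℝ)) f y with hg
    have hgm : ∀ n, Measurable (g n) := fun n =>
      (R.aux_measurable_op (SubMarkovResolvent.aux_pseq_pos n) hf).const_mul _
    set φ : E → ℝ≥0∞ := fun y => f y + ∑' n, g n y with hφ
    have hφm : Measurable φ := hf.add (Measurable.ennreal_tsum hgm)
    have htwo : (∑' n : ℕ, (2⁻¹ : ℝ≥0∞)^n) = 2 := by
      rw [ENNReal.tsum_geometric, ENNReal.one_sub_inv_two, inv_inv]
    refine ⟨φ, hφm, ?_, ?_, ?_⟩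
    · -- finite integral
      have hinteq : ∫⁻ y, φ y ∂m = (∫⁻ y, f y ∂m) + ∑' n, ∫⁻ y, g n y ∂m := by
        rw [hφ]
        rw [lintegral_add_left hf, lintegral_tsum (fun n => (hgm n).aemeasurable)]
      have hbound : ∀ n, ∫⁻ y, g n y ∂m ≤ 2⁻¹^n * ∫⁻ y, f y ∂m := by
        intro n
        have hsub := hm (1/(n+1 : ℝ)) (SubMarkovResolvent.aux_pseq_pos n) f hf
        calc ∫⁻ y, g n y ∂m
            = 2⁻¹^n * (ENNReal.ofReal (1/(n+1)) * ∫⁻ y, R.op (1/(n+1 : ℝ)) f y ∂m) := by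
              rw [hg]
              rw [lintegral_const_mul _ (R.aux_measurable_op (SubMarkovResolvent.aux_pseq_pos n) hf)]
              rw [ha]; ring
        _ ≤ 2⁻¹^n * ∫⁻ y, f y ∂m := mul_le_mul_right hsub _
      calc ∫⁻ y, φ y ∂m ≤ (∫⁻ y, f y ∂m) + ∑' n : ℕ, 2⁻¹^n * ∫⁻ y, f y ∂m := by
            rw [hinteq]
            exact add_le_add_right (ENNReal.tsum_le_tsum hbound) _
      _ = (∫⁻ y, f y ∂m) + 2 * ∫⁻ y, f y ∂m := by
            rw [ENNReal.tsum_mul_right, htwo]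
      _ < ⊤ := by
            refine ENNReal.add_lt_top.2 ⟨hfi, ?_⟩
            exact ENNReal.mul_lt_top (by norm_num) hfi
    · -- a.e. positive
      rw [ae_iff]
      refine measure_mono_null ?_ h2
      intro x hx
      have hφ0 : φ x = 0 := by
        have : ¬ 0 < φ x := hx
        simpa [pos_iff_ne_zero] using this
      have hop0 : ∀ n : ℕ, R.op (1/(n+1 : ℝ)) f x = 0 := by
        intro n
        have h3 : g n x ≤ φ x := by
          calc g n x ≤ ∑' k, g k x := ENNReal.le_tsum n
          _ ≤ φ x := le_add_self
        have h4 : g n x = 0 := le_zero_iff.1 (hφ0 ▸ h3)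
        rw [hg] at h4
        rcases mul_eq_zero.1 h4 with h5 | h5
        · exact absurd h5 (han n)
        · exact h5
      show R.pot f x = 0
      rw [R.aux_pot_eq hf x, ENNReal.iSup_eq_zero]
      exact hop0
    · -- a.e. finite potential
      have hb : ∀ x, R.pot φ x ≤ R.pot f x + 2 * R.pot f x := by
        intro x
        have e1 : R.pot φ x = R.pot f x + R.pot (fun y => ∑' n, g n y) x :=
          R.aux_pot_add hf (Measurable.ennreal_tsum hgm) x
        have e2 : R.pot (fun y => ∑' n, g n y) x = ∑' n, R.pot (g n) x :=
          R.aux_pot_tsum g hgm x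
        have e3 : ∀ n, R.pot (g n) x ≤ 2⁻¹^n * R.pot f x := by
          intro n
          have e4 : R.pot (g n) x = a n * R.op (1/(n+1 : ℝ)) (R.pot f) x := by
            have e5 : R.pot (g n) x = a n * R.pot (R.op (1/(n+1 : ℝ)) f) x :=
              R.aux_pot_const_mul (R.aux_measurable_op (SubMarkovResolvent.aux_pseq_pos n) hf) (a n) x
            rw [e5, R.aux_pot_op hf (SubMarkovResolvent.aux_pseq_pos n) x]
          rw [e4, ha]
          calc 2⁻¹^n * ENNReal.ofReal (1/(n+1)) * R.op (1/(n+1 : ℝ)) (R.pot f) x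
              = 2⁻¹^n * (ENNReal.ofReal (1/(n+1)) * R.op (1/(n+1 : ℝ)) (R.pot f) x) := by ring
          _ ≤ 2⁻¹^n * R.pot f x :=
            mul_le_mul_right (R.aux_supermedian hf (SubMarkovResolvent.aux_pseq_pos n) x) _
        calc R.pot φ x = R.pot f x + ∑' n, R.pot (g n) x := by rw [e1, e2]
        _ ≤ R.pot f x + ∑' n : ℕ, 2⁻¹^n * R.pot f x :=
          add_le_add_right (ENNReal.tsum_le_tsum e3) _
        _ = R.pot f x + 2 * R.pot f x := by rw [ENNReal.tsum_mul_right, htwo]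
      have h1' : ∀ᵐ x ∂m, R.pot f x < ⊤ := by
        rw [ae_iff]
        rw [show {x | ¬ R.pot f x < ⊤} = {x | R.pot f x < ⊤}ᶜ from (Set.compl_setOf _).symm]
        exact h1
      filter_upwards [h1'] with x hx
      calc R.pot φ x ≤ R.pot f x + 2 * R.pot f x := hb x
      _ < ⊤ := ENNReal.add_lt_top.2 ⟨hx, ENNReal.mul_lt_top (by norm_num) hx⟩
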